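/- Let k > 0, let n be a positive integer, and let a, b, α_1,…,α_n, β_1,…,β_n be real numbers with 0 < a ≤ b, α_i > 0, β_i > 0, and such that for all t ∈ [0,∞) and all i: at + α_i > 0, bt + β_i > 0, at + α_i ≤ bt + β_i, and ψ_k(at+α_i) > 0. Then for every t ∈ [0,1], ∏_{i=1}^n Γ_k(a+α_i)/Γ_k(b+β_i) ≤ ∏_{i=1}^n Γ_k(at+α_i)/Γ_k(bt+β_i) ≤ ∏_{i=1}^n Γ_k(α_i)/Γ_k(β_i). -/

import Mathlib

open Real Filter Set Topology MeasureTheory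

/-- The k-Gamma function `Γ_k(t) = ∫₀^∞ e^{-x^k/k} x^{t-1} dx`. -/
noncomputable def gammak (k t : ℝ) : ℝ :=
  ∫ x in Set.Ioi (0 : ℝ), Real.exp (-(x ^ k) / k) * x ^ (t - 1)

/-- The k-digamma function, defined via its series representation
`ψ_k(t) = (ln k − γ)/k − 1/t + ∑_{n=1}^∞ t/(nk(nk+t))`. -/
noncomputable def psik (k t : ℝ) : ℝ :=
  (Real.log k - eulerMascheroniConstant) / k - 1 / t +
    ∑' n : ℕ, t / (((n : ℝ) + 1) * k * (((n : ℝ) + 1) * k + t))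

lemma gammak_eq {k t : ℝ} (hk : 0 < k) (ht : 0 < t) :
    gammak k t = k ^ (t / k - 1) * Real.Gamma (t / k) := by
  have hk' : k ≠ 0 := hk.ne'
  have step1 : gammak k t
      = ∫ y in Ioi (0:ℝ), Real.exp (-y / k) * y ^ (t / k - 1) / k := by
    rw [gammak, ← integral_comp_rpow_Ioi (fun y => Real.exp (-y / k) * y ^ (t / k - 1) / k) hk']
    refine setIntegral_congr_fun measurableSet_Ioi (fun x hx => ?_)
    have hx0 : (0:ℝ) < x := hx
    rw [smul_eq_mul, ← rpow_mul hx0.le, abs_of_pos hk]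
    have : k * (t / k - 1) = t - k := by field_simp
    rw [this]
    have h3 : k * x ^ (k-1) * (Real.exp (-(x ^ k) / k) * x ^ (t-k) / k)
        = Real.exp (-(x ^ k) / k) * (x ^ (k-1) * x ^ (t-k)) := by
      field_simp
    rw [h3, ← rpow_add hx0]
    ring_nf
  have step2 : (∫ y in Ioi (0:ℝ), Real.exp (-y / k) * y ^ (t / k - 1) / k)
      = k⁻¹ * ∫ y in Ioi (0:ℝ), Real.exp (-y / k) * y ^ (t / k - 1) := by
    rw [MeasureTheory.integral_div]
    rw [div_eq_inv_mul]
  have step3 : (∫ y in Ioi (0:ℝ), Real.exp (-y / k) * y ^ (t / k - 1))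
      = k * (k ^ (t / k - 1) * Real.Gamma (t / k)) := by
    have := MeasureTheory.integral_comp_mul_left_Ioi
      (fun y => Real.exp (-y / k) * y ^ (t / k - 1)) 0 hk
    rw [mul_zero] at this
    have heq : ∀ x ∈ Ioi (0:ℝ), Real.exp (-(k * x) / k) * (k * x) ^ (t / k - 1)
        = k ^ (t / k - 1) * (Real.exp (-x) * x ^ (t / k - 1)) := by
      intro x hx
      have hx0 : (0:ℝ) < x := hx
      rw [mul_rpow hk.le hx0.le]
      have : -(k * x) / k = -x := by field_simp
      rw [this]; ring
    rw [setIntegral_congr_fun measurableSet_Ioi heq] at this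
    rw [MeasureTheory.integral_const_mul, ← Real.Gamma_eq_integral (by positivity)] at this
    -- this : k^(t/k-1) * Gamma (t/k) = k⁻¹ • ∫ ...
    rw [smul_eq_mul] at this
    field_simp at this ⊢
    linarith [this]
  rw [step1, step2, step3]
  field_simp

noncomputable def psi0 (x : ℝ) : ℝ :=
  -eulerMascheroniConstant - 1/x + ∑' n : ℕ, x / (((n:ℝ)+1) * (((n:ℝ)+1) + x))

lemma summable_base : Summable (fun n : ℕ => 1/((n:ℝ)+1)^2) := by
  have := Real.summable_one_div_nat_pow.mpr (one_lt_two (α := ℕ))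
  have h2 := (summable_nat_add_iff 1).mpr this
  refine h2.congr (fun n => ?_)
  push_cast
  ring

lemma summable_psi_term {x : ℝ} (hx : 0 ≤ x) :
    Summable (fun n : ℕ => x / (((n:ℝ)+1) * (((n:ℝ)+1) + x))) := by
  refine Summable.of_nonneg_of_le (fun n => by positivity) (fun n => ?_)
    (summable_base.mul_left x)
  have h1 : (0:ℝ) < (n:ℝ)+1 := by positivity
  rw [div_le_iff₀ (by positivity)]
  have : x * (1/((n:ℝ)+1)^2) * (((n:ℝ)+1) * (((n:ℝ)+1) + x))
      = x * ((((n:ℝ)+1) + x) / ((n:ℝ)+1)) := by field_simp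
  rw [this]
  have h2 : (1:ℝ) ≤ (((n:ℝ)+1) + x) / ((n:ℝ)+1) := by
    rw [le_div_iff₀ h1]; linarith
  nlinarith

lemma log_one_add_bounds {y : ℝ} (hy : 0 ≤ y) :
    0 ≤ y - Real.log (1+y) ∧ y - Real.log (1+y) ≤ y^2 := by
  have h1 : (0:ℝ) < 1 + y := by linarith
  constructor
  · have := Real.log_le_sub_one_of_pos h1
    linarith
  · have h2 := Real.log_le_sub_one_of_pos (show (0:ℝ) < (1+y)⁻¹ by positivity)
    rw [Real.log_inv] at h2
    have h3 : (1+y)⁻¹ - 1 = -(y/(1+y)) := by field_simp; ring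
    rw [h3] at h2
    -- h2 : -log (1+y) ≤ -(y/(1+y)), so y - log(1+y) ≤ y - y/(1+y) = y^2/(1+y) ≤ y^2
    have h4 : y - y/(1+y) = y^2/(1+y) := by field_simp; ring
    have h5 : y^2/(1+y) ≤ y^2 := by
      rw [div_le_iff₀ h1]; nlinarith
    linarith

lemma summable_weier {x : ℝ} (hx : 0 ≤ x) :
    Summable (fun n : ℕ => x/((n:ℝ)+1) - Real.log (1 + x/((n:ℝ)+1))) := by
  refine Summable.of_nonneg_of_le
    (fun n => (log_one_add_bounds (by positivity)).1) (fun n => ?_)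
    (summable_base.mul_left (x^2))
  have := (log_one_add_bounds (show 0 ≤ x/((n:ℝ)+1) by positivity)).2
  calc x/((n:ℝ)+1) - Real.log (1 + x/((n:ℝ)+1)) ≤ (x/((n:ℝ)+1))^2 := this
    _ = x^2 * (1/((n:ℝ)+1)^2) := by rw [div_pow]; ring

noncomputable def weierT (x : ℝ) : ℝ :=
  ∑' n : ℕ, (x/((n:ℝ)+1) - Real.log (1 + x/((n:ℝ)+1)))

lemma hasDerivAt_weierT {x : ℝ} (hx : 0 < x) :
    HasDerivAt weierT (∑' n : ℕ, x / (((n:ℝ)+1) * (((n:ℝ)+1) + x))) x := by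
  set s : Set ℝ := Ioo 0 (x+1) with hs
  have hso : IsOpen s := isOpen_Ioo
  have hd : ∀ (n : ℕ) (y : ℝ), 0 < y →
      HasDerivAt (fun z => z/((n:ℝ)+1) - Real.log (1 + z/((n:ℝ)+1)))
        (y / (((n:ℝ)+1) * (((n:ℝ)+1) + y))) y := by
    intro n y hy
    have hn1 : (0:ℝ) < (n:ℝ)+1 := by positivity
    have h1 : HasDerivAt (fun z : ℝ => z/((n:ℝ)+1)) (1/((n:ℝ)+1)) y := by
      simpa using (hasDerivAt_id y).div_const ((n:ℝ)+1)
    have h2 : HasDerivAt (fun z : ℝ => 1 + z/((n:ℝ)+1)) (1/((n:ℝ)+1)) y :=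
      (h1.const_add 1)
    have h3 : (0:ℝ) < 1 + y/((n:ℝ)+1) := by positivity
    have h4 := (h2.log h3.ne')
    have := h1.sub h4
    refine this.congr_deriv ?_
    field_simp
    ring
  refine hasDerivAt_of_tendstoUniformlyOn (l := Filter.atTop) (g := weierT)
      (g' := fun y => ∑' n : ℕ, y / (((n:ℝ)+1) * (((n:ℝ)+1) + y)))
      (f := fun (N : ℕ) (y : ℝ) =>
        ∑ n ∈ Finset.range N, (y/((n:ℝ)+1) - Real.log (1 + y/((n:ℝ)+1))))
      (f' := fun (N : ℕ) (y : ℝ) =>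
      ∑ n ∈ Finset.range N, y / (((n:ℝ)+1) * (((n:ℝ)+1) + y))) hso ?_ ?_ ?_
      (show x ∈ s by constructor <;> [exact hx; linarith])
  · refine tendstoUniformlyOn_tsum_nat (summable_base.mul_left (x+1)) ?_
    intro n y hy
    obtain ⟨hy0, hy1⟩ := hy
    rw [Real.norm_eq_abs, abs_of_nonneg (by positivity)]
    have h1 : (0:ℝ) < (n:ℝ)+1 := by positivity
    rw [div_le_iff₀ (by positivity)]
    have : (x+1) * (1/((n:ℝ)+1)^2) * (((n:ℝ)+1) * (((n:ℝ)+1) + y))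
        = (x+1) * ((((n:ℝ)+1) + y) / ((n:ℝ)+1)) := by field_simp
    rw [this]
    have h2 : (1:ℝ) ≤ (((n:ℝ)+1) + y) / ((n:ℝ)+1) := by
      rw [le_div_iff₀ h1]; linarith
    nlinarith
  · filter_upwards with N y hy
    exact HasDerivAt.fun_sum (fun n _ => hd n y hy.1)
  · intro y hy
    exact ((summable_weier hy.1.le).hasSum.tendsto_sum_nat)

noncomputable def weierL (x : ℝ) : ℝ :=
  -eulerMascheroniConstant * x - Real.log x + weierT x

lemma hasDerivAt_weierL {x : ℝ} (hx : 0 < x) : HasDerivAt weierL (psi0 x) x := by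
  have h1 : HasDerivAt (fun y : ℝ => -eulerMascheroniConstant * y)
      (-eulerMascheroniConstant) x := by
    simpa using (hasDerivAt_id x).const_mul (-eulerMascheroniConstant)
  have h2 : HasDerivAt Real.log (1/x) x := by
    simpa [one_div] using Real.hasDerivAt_log hx.ne'
  have := (h1.sub h2).add (hasDerivAt_weierT hx)
  exact this

lemma exp_weierL {x : ℝ} (hx : 0 < x) : Real.exp (weierL x) = Real.Gamma x := by
  have htend1 : Tendsto (fun N : ℕ => Real.exp (-eulerMascheroniConstant * x - Real.log x +
      ∑ n ∈ Finset.range N, (x/((n:ℝ)+1) - Real.log (1 + x/((n:ℝ)+1)))))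
      atTop (𝓝 (Real.exp (weierL x))) := by
    refine (Real.continuous_exp.continuousAt.tendsto.comp ?_)
    refine Tendsto.const_add _ ?_
    exact (summable_weier hx.le).hasSum.tendsto_sum_nat
  have key : ∀ N : ℕ, 1 ≤ N → Real.exp (-eulerMascheroniConstant * x - Real.log x +
      ∑ n ∈ Finset.range N, (x/((n:ℝ)+1) - Real.log (1 + x/((n:ℝ)+1))))
      = Real.exp (x * ((harmonic N : ℝ) - Real.log N - eulerMascheroniConstant))
        * Real.GammaSeq x N := by
    intro N hN
    have hN0 : (0:ℝ) < (N:ℝ) := by exact_mod_cast hN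
    have hprodpos : (0:ℝ) < ∏ j ∈ Finset.range (N+1), (x + (j:ℝ)) := by
      apply Finset.prod_pos
      intro j _
      positivity
    have hsum : ∑ n ∈ Finset.range N, (x/((n:ℝ)+1) - Real.log (1 + x/((n:ℝ)+1)))
        = x * (harmonic N : ℝ) - Real.log (∏ n ∈ Finset.range N, (1 + x/((n:ℝ)+1))) := by
      rw [Finset.sum_sub_distrib, Real.log_prod (fun n _ => by positivity)]
      congr 1
      rw [harmonic]
      push_cast
      rw [Finset.mul_sum]
      exact Finset.sum_congr rfl (fun i _ => by rw [div_eq_mul_inv])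
    rw [hsum]
    have hprod : (∏ n ∈ Finset.range N, (1 + x/((n:ℝ)+1)))
        = (∏ j ∈ Finset.range (N+1), (x + (j:ℝ))) / (x * (Nat.factorial N : ℝ)) := by
      have e1 : ∀ n ∈ Finset.range N, (1 + x/((n:ℝ)+1)) = (x + ((n:ℝ)+1)) / ((n:ℝ)+1) := by
        intro n _
        field_simp
        ring
      rw [Finset.prod_congr rfl e1, Finset.prod_div_distrib]
      have e2 : (∏ j ∈ Finset.range (N+1), (x + (j:ℝ)))
          = (∏ n ∈ Finset.range N, (x + ((n:ℝ)+1))) * x := by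
        rw [Finset.prod_range_succ' (fun j => x + (j:ℝ)) N]
        congr 1
        · exact Finset.prod_congr rfl (fun n _ => by push_cast; ring)
        · norm_num
      have e3 : (∏ n ∈ Finset.range N, ((n:ℝ)+1)) = (Nat.factorial N : ℝ) := by
        rw [← Finset.prod_range_add_one_eq_factorial N]
        push_cast
        rfl
      rw [e2, e3]
      have hx' : x ≠ 0 := hx.ne'
      have hf' : (Nat.factorial N : ℝ) ≠ 0 := by positivity
      field_simp
    rw [hprod]
    have hfactpos : (0:ℝ) < (Nat.factorial N : ℝ) := by exact_mod_cast Nat.factorial_pos N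
    rw [Real.log_div hprodpos.ne' (by positivity), Real.log_mul hx.ne' hfactpos.ne']
    have hGpos : 0 < Real.GammaSeq x N := by
      rw [Real.GammaSeq]
      have : (0:ℝ) < (N:ℝ) ^ x := Real.rpow_pos_of_pos hN0 x
      positivity
    rw [← Real.exp_log hGpos, ← Real.exp_add]
    congr 1
    rw [Real.GammaSeq, Real.log_div (by positivity) hprodpos.ne',
      Real.log_mul (Real.rpow_pos_of_pos hN0 x).ne' hfactpos.ne', Real.log_rpow hN0]
    ring
  have htend2 : Tendsto (fun N : ℕ => Real.exp (x * ((harmonic N : ℝ) - Real.log N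
      - eulerMascheroniConstant)) * Real.GammaSeq x N) atTop (𝓝 (Real.Gamma x)) := by
    have h1 : Tendsto (fun N : ℕ => Real.exp (x * ((harmonic N : ℝ) - Real.log N
        - eulerMascheroniConstant))) atTop (𝓝 1) := by
      have h0 := Real.tendsto_harmonic_sub_log
      have h1' := (h0.sub_const eulerMascheroniConstant).const_mul x
      simp only [sub_self, mul_zero] at h1'
      simpa [Real.exp_zero, Function.comp_def] using (Real.continuous_exp.tendsto 0).comp h1'
    have := h1.mul (Real.GammaSeq_tendsto_Gamma x)
    simpa using this
  have : Tendsto (fun N : ℕ => Real.exp (-eulerMascheroniConstant * x - Real.log x +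
      ∑ n ∈ Finset.range N, (x/((n:ℝ)+1) - Real.log (1 + x/((n:ℝ)+1)))))
      atTop (𝓝 (Real.Gamma x)) := by
    refine htend2.congr' ?_
    filter_upwards [eventually_ge_atTop 1] with N hN
    exact (key N hN).symm
  exact tendsto_nhds_unique htend1 this


lemma log_Gamma_eq_weierL {x : ℝ} (hx : 0 < x) : Real.log (Real.Gamma x) = weierL x := by
  rw [← exp_weierL hx, Real.log_exp]

lemma hasDerivAt_logGamma {x : ℝ} (hx : 0 < x) :
    HasDerivAt (fun y => Real.log (Real.Gamma y)) (psi0 x) x := by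
  refine (hasDerivAt_weierL hx).congr_of_eventuallyEq ?_
  filter_upwards [Ioi_mem_nhds hx] with y hy
  exact log_Gamma_eq_weierL hy

lemma psik_eq {k t : ℝ} (hk : 0 < k) (ht : 0 < t) :
    psik k t = (Real.log k + psi0 (t / k)) / k := by
  rw [psik, psi0]
  have hterm : ∀ n : ℕ, t / (((n : ℝ) + 1) * k * (((n : ℝ) + 1) * k + t))
      = ((t/k) / (((n:ℝ)+1) * (((n:ℝ)+1) + t/k))) / k := by
    intro n
    rw [div_div]
    rw [div_eq_div_iff (by positivity) (by positivity)]
    field_simp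
  rw [tsum_congr hterm, tsum_div_const]
  have h1 : 1 / (t/k) = k / t := by field_simp
  field_simp
  ring

lemma summable_psik {k t : ℝ} (hk : 0 < k) (ht : 0 ≤ t) :
    Summable (fun n : ℕ => t / (((n : ℝ) + 1) * k * (((n : ℝ) + 1) * k + t))) := by
  refine Summable.of_nonneg_of_le (fun n => by positivity) (fun n => ?_)
    (summable_base.mul_left (t / k^2))
  have h1 : (0:ℝ) < ((n:ℝ)+1) * k := by positivity
  rw [div_le_iff₀ (by positivity)]
  have e : t / k^2 * (1/((n:ℝ)+1)^2) * (((n:ℝ)+1) * k * (((n:ℝ)+1) * k + t))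
      = t * ((((n:ℝ)+1) * k + t) / (((n:ℝ)+1) * k)) := by
    field_simp
  rw [e]
  have h2 : (1:ℝ) ≤ (((n:ℝ)+1) * k + t) / (((n:ℝ)+1) * k) := by
    rw [le_div_iff₀ h1]; linarith
  nlinarith

lemma psik_mono {k : ℝ} (hk : 0 < k) {s u : ℝ} (hs : 0 < s) (hsu : s ≤ u) :
    psik k s ≤ psik k u := by
  have hu : 0 < u := lt_of_lt_of_le hs hsu
  rw [psik, psik]
  have h1 : 1 / u ≤ 1 / s := one_div_le_one_div_of_le hs hsu
  have h2 : (∑' n : ℕ, s / (((n : ℝ) + 1) * k * (((n : ℝ) + 1) * k + s)))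
      ≤ ∑' n : ℕ, u / (((n : ℝ) + 1) * k * (((n : ℝ) + 1) * k + u)) := by
    refine Summable.tsum_le_tsum (fun n => ?_) (summable_psik hk hs.le) (summable_psik hk hu.le)
    have hc : (0:ℝ) < ((n:ℝ)+1) * k := by positivity
    rw [div_le_div_iff₀ (by positivity) (by positivity)]
    have key : s * (((n:ℝ)+1)*k)^2 ≤ u * (((n:ℝ)+1)*k)^2 :=
      mul_le_mul_of_nonneg_right hsu (by positivity)
    nlinarith
  linarith

lemma gammak_pos {k t : ℝ} (hk : 0 < k) (ht : 0 < t) : 0 < gammak k t := by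
  rw [gammak_eq hk ht]
  exact mul_pos (Real.rpow_pos_of_pos hk _) (Real.Gamma_pos_of_pos (by positivity))

lemma hasDerivAt_log_gammak {k u : ℝ} (hk : 0 < k) (hu : 0 < u) :
    HasDerivAt (fun y => Real.log (gammak k y)) (psik k u) u := by
  have huk : 0 < u / k := by positivity
  have hA : HasDerivAt (fun y : ℝ => (y/k - 1) * Real.log k) (Real.log k / k) u := by
    have := (((hasDerivAt_id u).div_const k).sub_const 1).mul_const (Real.log k)
    simpa [div_eq_inv_mul, mul_comm] using this
  have hB : HasDerivAt (fun y : ℝ => Real.log (Real.Gamma (y/k))) (psi0 (u/k) * (1/k)) u := by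
    have hinner : HasDerivAt (fun y : ℝ => y / k) (1/k) u := by
      simpa using (hasDerivAt_id u).div_const k
    exact (hasDerivAt_logGamma huk).comp u hinner
  have h1 := hA.add hB
  have hval : psik k u = Real.log k / k + psi0 (u/k) * (1/k) := by
    rw [psik_eq hk hu]
    ring
  rw [← hval] at h1
  refine h1.congr_of_eventuallyEq ?_
  filter_upwards [Ioi_mem_nhds hu] with y hy
  have hy0 : (0:ℝ) < y := hy
  rw [gammak_eq hk hy0,
    Real.log_mul (Real.rpow_pos_of_pos hk _).ne' (Real.Gamma_pos_of_pos (by positivity)).ne',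
    Real.log_rpow hk]
  rfl

theorem X_bounds (k : ℝ) (hk : 0 < k) (n : ℕ) (hn : 0 < n)
    (a b : ℝ) (α β : Fin n → ℝ) (ha : 0 < a) (hab : a ≤ b)
    (hα : ∀ i, 0 < α i) (hβ : ∀ i, 0 < β i)
    (h : ∀ t : ℝ, 0 ≤ t → ∀ i, 0 < a * t + α i ∧ 0 < b * t + β i ∧
      a * t + α i ≤ b * t + β i ∧ 0 < psik k (a * t + α i))
    (t : ℝ) (ht : t ∈ Set.Icc (0 : ℝ) 1) :
    (∏ i, gammak k (a + α i) / gammak k (b + β i)) ≤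
        (∏ i, gammak k (a * t + α i) / gammak k (b * t + β i)) ∧
      (∏ i, gammak k (a * t + α i) / gammak k (b * t + β i)) ≤
        ∏ i, gammak k (α i) / gammak k (β i) := by
  obtain ⟨ht0, ht1⟩ := ht
  set F : ℝ → ℝ := fun s => ∑ i, (Real.log (gammak k (a * s + α i))
    - Real.log (gammak k (b * s + β i))) with hF
  have hb : 0 < b := lt_of_lt_of_le ha hab
  -- derivative of F
  have hderiv : ∀ s : ℝ, 0 ≤ s → HasDerivAt F
      (∑ i, (a * psik k (a * s + α i) - b * psik k (b * s + β i))) s := by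
    intro s hs
    refine HasDerivAt.fun_sum (fun i _ => ?_)
    obtain ⟨h1, h2, h3, h4⟩ := h s hs i
    have hA : HasDerivAt (fun y : ℝ => a * y + α i) a s := by
      simpa using ((hasDerivAt_id s).const_mul a).add_const (α i)
    have hB : HasDerivAt (fun y : ℝ => b * y + β i) b s := by
      simpa using ((hasDerivAt_id s).const_mul b).add_const (β i)
    have hGa := (hasDerivAt_log_gammak hk h1).comp s hA
    have hGb := (hasDerivAt_log_gammak hk h2).comp s hB
    have := hGa.sub hGb
    exact this.congr_deriv (by ring)
  -- F is antitone on [0, ∞)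
  have hanti : AntitoneOn F (Ici (0:ℝ)) := by
    refine antitoneOn_of_deriv_nonpos (convex_Ici 0) ?_ ?_ ?_
    · intro s hs
      exact (hderiv s hs).continuousAt.continuousWithinAt
    · intro s hs
      rw [interior_Ici] at hs
      exact (hderiv s (le_of_lt hs)).differentiableAt.differentiableWithinAt
    · intro s hs
      rw [interior_Ici] at hs
      rw [(hderiv s (le_of_lt hs)).deriv]
      refine Finset.sum_nonpos (fun i _ => ?_)
      obtain ⟨h1, h2, h3, h4⟩ := h s (le_of_lt hs) i
      have hmono : psik k (a * s + α i) ≤ psik k (b * s + β i) := psik_mono hk h1 h3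
      have : a * psik k (a * s + α i) ≤ b * psik k (a * s + α i) :=
        mul_le_mul_of_nonneg_right hab (le_of_lt h4)
      have : a * psik k (a * s + α i) ≤ b * psik k (b * s + β i) :=
        le_trans this (mul_le_mul_of_nonneg_left hmono hb.le)
      linarith
  -- exp (F s) equals the product
  have hexp : ∀ s : ℝ, 0 ≤ s → Real.exp (F s)
      = ∏ i, gammak k (a * s + α i) / gammak k (b * s + β i) := by
    intro s hs
    rw [hF, Real.exp_sum]
    refine Finset.prod_congr rfl (fun i _ => ?_)
    obtain ⟨h1, h2, h3, h4⟩ := h s hs i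
    rw [Real.exp_sub, Real.exp_log (gammak_pos hk h1), Real.exp_log (gammak_pos hk h2)]
  have hF10 : F 1 ≤ F t := hanti (mem_Ici.mpr ht0) (mem_Ici.mpr zero_le_one) ht1
  have hFt0 : F t ≤ F 0 := hanti (mem_Ici.mpr le_rfl) (mem_Ici.mpr ht0) ht0
  constructor
  · have := Real.exp_le_exp.mpr hF10
    rw [hexp 1 zero_le_one, hexp t ht0] at this
    calc (∏ i, gammak k (a + α i) / gammak k (b + β i))
        = ∏ i, gammak k (a * 1 + α i) / gammak k (b * 1 + β i) := by
          refine Finset.prod_congr rfl (fun i _ => by norm_num)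
      _ ≤ _ := this
  · have := Real.exp_le_exp.mpr hFt0
    rw [hexp t ht0, hexp 0 le_rfl] at this
    calc (∏ i, gammak k (a * t + α i) / gammak k (b * t + β i))
        ≤ ∏ i, gammak k (a * 0 + α i) / gammak k (b * 0 + β i) := this
      _ = ∏ i, gammak k (α i) / gammak k (β i) := by
          refine Finset.prod_congr rfl (fun i _ => by norm_num)
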